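/- With e(i) = k - min(k, max(0, k-i) + max(0, k-(m-i)-1)) and the effective candidate space size |V^(i)| = 4^{e(i)}, the leakage ratio r = 1 - (∑_{i=1}^m e(i) · log 4)/(m · k · log 4) satisfies: r = 1 if m ≤ k - 1, and r = (k - 1)/m if m ≥ k, for all natural numbers k ≥ 1 and m ≥ 1. -/
import Mathlib


/-- Number of undetermined nucleotides of the `i`-th of `m` consecutive masked
overlapping `k`-mer tokens (1-indexed). -/
def maskExponent (k m i : ℕ) : ℕ := k - min k ((k - i) + (k - (m - i) - 1))

/-- Leakage ratio: `1` minus the quotient of the maximum entropy with leakage,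
`∑ i, e i * log 4`, by the maximum entropy without leakage, `m * k * log 4`. -/
noncomputable def leakageRatio (k m : ℕ) : ℝ :=
  1 - (∑ i ∈ Finset.Icc 1 m, (maskExponent k m i : ℝ) * Real.log 4) /
        ((m : ℝ) * (k : ℝ) * Real.log 4)

lemma sum_maskExponent (k m : ℕ) (hk : 1 ≤ k) (hkm : k ≤ m) :
    ∑ i ∈ Finset.Icc 1 m, maskExponent k m i = k * (m - k + 1) := by
  have h1 : ∀ i ∈ Finset.Icc 1 m, maskExponent k m i =
      ((Finset.Icc 1 (m - k + 1)).filter (fun p => p ≤ i ∧ i ≤ p + k - 1)).card := by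
    intro i hi
    simp only [Finset.mem_Icc] at hi
    have he : (Finset.Icc 1 (m - k + 1)).filter (fun p => p ≤ i ∧ i ≤ p + k - 1)
        = Finset.Icc (max 1 (i + 1 - k)) (min (m - k + 1) i) := by
      ext p
      simp only [Finset.mem_filter, Finset.mem_Icc, le_max_iff, max_le_iff, le_min_iff,
        min_le_iff]
      omega
    rw [he, Nat.card_Icc]
    unfold maskExponent
    omega
  rw [Finset.sum_congr rfl h1]
  simp only [Finset.card_filter]
  rw [Finset.sum_comm]
  have h2 : ∀ p ∈ Finset.Icc 1 (m - k + 1),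
      (∑ i ∈ Finset.Icc 1 m, if p ≤ i ∧ i ≤ p + k - 1 then 1 else 0) = k := by
    intro p hp
    simp only [Finset.mem_Icc] at hp
    rw [← Finset.card_filter]
    have he : (Finset.Icc 1 m).filter (fun i => p ≤ i ∧ i ≤ p + k - 1)
        = Finset.Icc p (p + k - 1) := by
      ext i
      simp only [Finset.mem_filter, Finset.mem_Icc]
      omega
    rw [he, Nat.card_Icc]
    omega
  rw [Finset.sum_congr rfl h2, Finset.sum_const, Nat.card_Icc, smul_eq_mul]
  have : m - k + 1 + 1 - 1 = m - k + 1 := by omega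
  rw [this, Nat.mul_comm]

theorem stmt_2 (k m : ℕ) (hk : 1 ≤ k) (hm : 1 ≤ m) :
    (m ≤ k - 1 → leakageRatio k m = 1) ∧
    (k ≤ m → leakageRatio k m = ((k : ℝ) - 1) / (m : ℝ)) := by
  have hL : Real.log 4 ≠ 0 := by
    have : (0 : ℝ) < Real.log 4 := Real.log_pos (by norm_num)
    linarith
  constructor
  · intro hmk
    have hz : ∀ i ∈ Finset.Icc 1 m, (maskExponent k m i : ℝ) * Real.log 4 = 0 := by
      intro i hi
      simp only [Finset.mem_Icc] at hi
      have : maskExponent k m i = 0 := by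
        unfold maskExponent
        omega
      rw [this]
      simp
    unfold leakageRatio
    rw [Finset.sum_congr rfl hz]
    simp
  · intro hkm
    have hsum : ∑ i ∈ Finset.Icc 1 m, (maskExponent k m i : ℝ) * Real.log 4
        = (k : ℝ) * ((m : ℝ) - (k : ℝ) + 1) * Real.log 4 := by
      rw [← Finset.sum_mul, ← Nat.cast_sum, sum_maskExponent k m hk hkm]
      push_cast [Nat.cast_sub hkm]
      ring
    unfold leakageRatio
    rw [hsum]
    have hm0 : (m : ℝ) ≠ 0 := by positivity
    have hk0 : (k : ℝ) ≠ 0 := by positivity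
    field_simp
    ring
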